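/- Let σ be an alternating ℂ-bilinear form on V_ℂ with σ∧σ = 0 and σ∧σ̄ ≠ 0. Then K := {v ∈ V_ℂ : σ(v,w) = 0 for all w ∈ V_ℂ} is a 2-dimensional complex subspace with K ∩ K̄ = 0, so V_ℂ = K ⊕ K̄; consequently there is a unique ℝ-linear endomorphism J of V with J∘J = −id_V whose (+i)-eigenspace in V_ℂ equals K (a complex structure on V for which σ is of type (2,0)). -/

import Mathlib

open scoped TensorProduct

set_option synthInstance.maxHeartbeats 1000000
set_option maxHeartbeats 1000000

noncomputable section

variable (V : Type) [AddCommGroup V] [Module ℝ V]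

/-- The complexification `V_ℂ = ℂ ⊗ V`. -/
abbrev VC := ℂ ⊗[ℝ] V

/-- Complex conjugation on `ℂ`, as an ℝ-linear map. -/
def conjR : ℂ →ₗ[ℝ] ℂ := Complex.conjAe.toLinearMap

/-- Complex conjugation on `V_ℂ`, fixing the real points `V`. -/
def cV : VC V →ₗ[ℝ] VC V := LinearMap.rTensor V conjR

/-- The value of the wedge product `a∧b ∈ ⋀⁴((V_ℂ)*)` of two alternating bilinear forms,
evaluated at `(v₁,v₂,v₃,v₄)`. -/
def wedge4 (a b : VC V → VC V → ℂ) (v₁ v₂ v₃ v₄ : VC V) : ℂ :=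
  a v₁ v₂ * b v₃ v₄ - a v₁ v₃ * b v₂ v₄ + a v₁ v₄ * b v₂ v₃
    + a v₂ v₃ * b v₁ v₄ - a v₂ v₄ * b v₁ v₃ + a v₃ v₄ * b v₁ v₂

namespace GCYAux

variable {V}

lemma cV_tmul (c : ℂ) (v : V) : cV V (c ⊗ₜ v) = (starRingEnd ℂ) c ⊗ₜ v := rfl

lemma cV_cV (x : VC V) : cV V (cV V x) = x := by
  induction x using TensorProduct.induction_on with
  | zero => simp
  | tmul c v => simp [cV_tmul]
  | add a b ha hb => simp [map_add, ha, hb]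

lemma cV_smul (z : ℂ) (x : VC V) : cV V (z • x) = (starRingEnd ℂ) z • cV V x := by
  induction x using TensorProduct.induction_on with
  | zero => simp
  | tmul c v => rw [TensorProduct.smul_tmul']; simp [cV_tmul, TensorProduct.smul_tmul']
  | add a b ha hb => simp [map_add, smul_add, ha, hb]

section General

variable {M : Type*} [AddCommGroup M] [Module ℂ M]

lemma skew_of_alt (τ : M →ₗ[ℂ] M →ₗ[ℂ] ℂ) (h : ∀ v, τ v v = 0)
    (v w : M) : τ v w = - τ w v := by
  have h2 := h (v + w)
  simp only [map_add, LinearMap.add_apply, h] at h2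
  linear_combination h2

/-- rank lemma: alternating + Plücker + nonzero value ⇒ kernel has dimension 2. -/
lemma ker_finrank_two [FiniteDimensional ℂ M] (hd : Module.finrank ℂ M = 4)
    (τ : M →ₗ[ℂ] M →ₗ[ℂ] ℂ) (h : ∀ v, τ v v = 0)
    (hpl : ∀ v w a b : M, τ v w * τ a b - τ v a * τ w b + τ v b * τ w a = 0)
    {a b : M} (hab : τ a b ≠ 0) : Module.finrank ℂ (LinearMap.ker τ) = 2 := by
  set L : M →ₗ[ℂ] ℂ × ℂ := LinearMap.prod ((τ.flip) a) ((τ.flip) b) with hL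
  have hker : LinearMap.ker L = LinearMap.ker τ := by
    ext v
    simp only [LinearMap.mem_ker, hL, LinearMap.prod_apply, Function.prod, LinearMap.flip_apply,
      Prod.mk_eq_zero]
    constructor
    · rintro ⟨h1, h2⟩
      ext w
      have h3 := hpl v w a b
      rw [h1, h2] at h3
      have h4 : τ v w * τ a b = 0 := by linear_combination h3
      simpa [hab] using (mul_eq_zero.mp h4)
    · intro hv
      rw [hv]; simp
  have hrange : LinearMap.range L = ⊤ := by
    rw [LinearMap.range_eq_top]
    intro p
    refine ⟨(p.2 / τ a b) • a + (-(p.1 / τ a b)) • b, ?_⟩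
    have h1 : L a = (0, τ a b) := by simp [hL, LinearMap.prod_apply, h, skew_of_alt τ h a b]
    have h2 : L b = (- τ a b, 0) := by
      simp [hL, LinearMap.prod_apply, h]
      exact (skew_of_alt τ h b a).trans rfl
    rw [map_add, map_smul, map_smul, h1, h2]
    ext <;> simp <;> field_simp
  have h5 := LinearMap.finrank_range_add_finrank_ker L
  rw [hker, hrange] at h5
  have h2 : Module.finrank ℂ (⊤ : Submodule ℂ (ℂ × ℂ)) = 2 := by simp
  omega

/-- expression form of wedge4 -/
def w4 (s t : M →ₗ[ℂ] M →ₗ[ℂ] ℂ) (v₁ v₂ v₃ v₄ : M) : ℂ :=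
  s v₁ v₂ * t v₃ v₄ - s v₁ v₃ * t v₂ v₄ + s v₁ v₄ * t v₂ v₃
    + s v₂ v₃ * t v₁ v₄ - s v₂ v₄ * t v₁ v₃ + s v₃ v₄ * t v₁ v₂

lemma w4_core1 (s t : M →ₗ[ℂ] M →ₗ[ℂ] ℂ) (hs : ∀ v, s v v = 0) (ht : ∀ v, t v v = 0)
    (y : M) (hys : ∀ w, s y w = 0) (hyt : ∀ w, t y w = 0)
    (v₁ v₂ v₃ v₄ : M) (g₁ g₂ g₃ g₄ : ℂ) (hg : g₁ ≠ 0)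
    (hsum : g₁ • v₁ + g₂ • v₂ + g₃ • v₃ + g₄ • v₄ = y) :
    w4 s t v₁ v₂ v₃ v₄ = 0 := by
  have hA : ∀ w, g₁ * s v₁ w = - (g₂ * s v₂ w) - g₃ * s v₃ w - g₄ * s v₄ w := by
    intro w
    have h0 := congrArg (fun u => s u w) hsum
    simp only [map_add, map_smul, LinearMap.add_apply, LinearMap.smul_apply,
      smul_eq_mul, hys] at h0
    linear_combination h0
  have hB : ∀ w, g₁ * t v₁ w = - (g₂ * t v₂ w) - g₃ * t v₃ w - g₄ * t v₄ w := by
    intro w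
    have h0 := congrArg (fun u => t u w) hsum
    simp only [map_add, map_smul, LinearMap.add_apply, LinearMap.smul_apply,
      smul_eq_mul, hyt] at h0
    linear_combination h0
  have EA2 : g₁ * s v₁ v₂ = g₃ * s v₂ v₃ + g₄ * s v₂ v₄ := by
    linear_combination hA v₂ - g₂ * hs v₂ - g₃ * skew_of_alt s hs v₃ v₂
      - g₄ * skew_of_alt s hs v₄ v₂
  have EA3 : g₁ * s v₁ v₃ = - (g₂ * s v₂ v₃) + g₄ * s v₃ v₄ := by
    linear_combination hA v₃ - g₃ * hs v₃ - g₄ * skew_of_alt s hs v₄ v₃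
  have EA4 : g₁ * s v₁ v₄ = - (g₂ * s v₂ v₄) - g₃ * s v₃ v₄ := by
    linear_combination hA v₄ - g₄ * hs v₄
  have EB2 : g₁ * t v₁ v₂ = g₃ * t v₂ v₃ + g₄ * t v₂ v₄ := by
    linear_combination hB v₂ - g₂ * ht v₂ - g₃ * skew_of_alt t ht v₃ v₂
      - g₄ * skew_of_alt t ht v₄ v₂
  have EB3 : g₁ * t v₁ v₃ = - (g₂ * t v₂ v₃) + g₄ * t v₃ v₄ := by
    linear_combination hB v₃ - g₃ * ht v₃ - g₄ * skew_of_alt t ht v₄ v₃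
  have EB4 : g₁ * t v₁ v₄ = - (g₂ * t v₂ v₄) - g₃ * t v₃ v₄ := by
    linear_combination hB v₄ - g₄ * ht v₄
  have hmul : g₁ * w4 s t v₁ v₂ v₃ v₄ = 0 := by
    simp only [w4]
    linear_combination t v₃ v₄ * EA2 - t v₂ v₄ * EA3 + t v₂ v₃ * EA4
      + s v₂ v₃ * EB4 - s v₂ v₄ * EB3 + s v₃ v₄ * EB2
  rcases mul_eq_zero.mp hmul with h | h
  · exact absurd h hg
  · exact h

lemma w4_swap12 (s t : M →ₗ[ℂ] M →ₗ[ℂ] ℂ) (hs : ∀ v, s v v = 0) (ht : ∀ v, t v v = 0)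
    (v₁ v₂ v₃ v₄ : M) : w4 s t v₁ v₂ v₃ v₄ = - w4 s t v₂ v₁ v₃ v₄ := by
  simp only [w4]
  rw [skew_of_alt s hs v₂ v₁, skew_of_alt t ht v₂ v₁]
  ring

lemma w4_swap13 (s t : M →ₗ[ℂ] M →ₗ[ℂ] ℂ) (hs : ∀ v, s v v = 0) (ht : ∀ v, t v v = 0)
    (v₁ v₂ v₃ v₄ : M) : w4 s t v₁ v₂ v₃ v₄ = - w4 s t v₃ v₂ v₁ v₄ := by
  simp only [w4]
  rw [skew_of_alt s hs v₃ v₂, skew_of_alt t ht v₃ v₂, skew_of_alt s hs v₃ v₁,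
    skew_of_alt t ht v₃ v₁, skew_of_alt s hs v₂ v₁, skew_of_alt t ht v₂ v₁]
  ring

lemma w4_swap14 (s t : M →ₗ[ℂ] M →ₗ[ℂ] ℂ) (hs : ∀ v, s v v = 0) (ht : ∀ v, t v v = 0)
    (v₁ v₂ v₃ v₄ : M) : w4 s t v₁ v₂ v₃ v₄ = - w4 s t v₄ v₂ v₃ v₁ := by
  simp only [w4]
  rw [skew_of_alt s hs v₄ v₂, skew_of_alt t ht v₄ v₂, skew_of_alt s hs v₄ v₃,
    skew_of_alt t ht v₄ v₃, skew_of_alt s hs v₄ v₁, skew_of_alt t ht v₄ v₁,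
    skew_of_alt s hs v₂ v₁, skew_of_alt t ht v₂ v₁, skew_of_alt s hs v₃ v₁,
    skew_of_alt t ht v₃ v₁]
  ring

lemma w4_vanish (s t : M →ₗ[ℂ] M →ₗ[ℂ] ℂ) (hs : ∀ v, s v v = 0) (ht : ∀ v, t v v = 0)
    (y : M) (hys : ∀ w, s y w = 0) (hyt : ∀ w, t y w = 0)
    (v₁ v₂ v₃ v₄ : M) (g₁ g₂ g₃ g₄ : ℂ)
    (hg : ¬ (g₁ = 0 ∧ g₂ = 0 ∧ g₃ = 0 ∧ g₄ = 0))
    (hsum : g₁ • v₁ + g₂ • v₂ + g₃ • v₃ + g₄ • v₄ = y) :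
    w4 s t v₁ v₂ v₃ v₄ = 0 := by
  by_cases h1 : g₁ = 0
  · by_cases h2 : g₂ = 0
    · by_cases h3 : g₃ = 0
      · have h4 : g₄ ≠ 0 := by tauto
        rw [w4_swap14 s t hs ht]
        rw [w4_core1 s t hs ht y hys hyt v₄ v₂ v₃ v₁ g₄ g₂ g₃ g₁ h4 (by rw [← hsum]; abel)]
        simp
      · rw [w4_swap13 s t hs ht]
        rw [w4_core1 s t hs ht y hys hyt v₃ v₂ v₁ v₄ g₃ g₂ g₁ g₄ h3 (by rw [← hsum]; abel)]
        simp
    · rw [w4_swap12 s t hs ht]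
      rw [w4_core1 s t hs ht y hys hyt v₂ v₁ v₃ v₄ g₂ g₁ g₃ g₄ h2 (by rw [← hsum]; abel)]
      simp
  · exact w4_core1 s t hs ht y hys hyt v₁ v₂ v₃ v₄ g₁ g₂ g₃ g₄ h1 hsum

end General

/-- The conjugate form `σ̄`. -/
def sigmaBar (σ : VC V →ₗ[ℂ] VC V →ₗ[ℂ] ℂ) : VC V →ₗ[ℂ] VC V →ₗ[ℂ] ℂ where
  toFun v :=
    { toFun := fun w => (starRingEnd ℂ) (σ (cV V v) (cV V w))
      map_add' := fun w₁ w₂ => by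
        have h : cV V (w₁ + w₂) = cV V w₁ + cV V w₂ := map_add _ _ _
        simp only [h, map_add]
      map_smul' := fun z w => by
        simp only [cV_smul, map_smul, smul_eq_mul, map_mul, Complex.conj_conj,
          RingHom.id_apply] }
  map_add' v₁ v₂ := LinearMap.ext fun w => by
    have h : cV V (v₁ + v₂) = cV V v₁ + cV V v₂ := map_add _ _ _
    simp only [LinearMap.coe_mk, AddHom.coe_mk, LinearMap.add_apply, h, map_add]
  map_smul' z v := LinearMap.ext fun w => by
    simp only [LinearMap.coe_mk, AddHom.coe_mk, LinearMap.smul_apply, RingHom.id_apply,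
      smul_eq_mul, cV_smul, map_smul, map_mul, Complex.conj_conj]

lemma sigmaBar_apply (σ : VC V →ₗ[ℂ] VC V →ₗ[ℂ] ℂ) (v w : VC V) :
    sigmaBar σ v w = (starRingEnd ℂ) (σ (cV V v) (cV V w)) := rfl

end GCYAux

open GCYAux

theorem complex_structure_of_gcy_two_form
    (V : Type) [AddCommGroup V] [Module ℝ V] [FiniteDimensional ℝ V]
    (hdim : Module.finrank ℝ V = 4)
    (σ : VC V →ₗ[ℂ] VC V →ₗ[ℂ] ℂ)
    (halt : ∀ v : VC V, σ v v = 0)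
    (hσσ : ∀ v₁ v₂ v₃ v₄ : VC V,
      wedge4 V (fun v w => σ v w) (fun v w => σ v w) v₁ v₂ v₃ v₄ = 0)
    (hσσbar : ∃ v₁ v₂ v₃ v₄ : VC V,
      wedge4 V (fun v w => σ v w)
        (fun v w => (starRingEnd ℂ) (σ (cV V v) (cV V w))) v₁ v₂ v₃ v₄ ≠ 0) :
    Module.finrank ℂ (LinearMap.ker σ) = 2 ∧
    LinearMap.ker σ ⊓ Submodule.span ℂ (cV V '' (LinearMap.ker σ : Set (VC V))) = ⊥ ∧
    IsCompl (LinearMap.ker σ) (Submodule.span ℂ (cV V '' (LinearMap.ker σ : Set (VC V)))) ∧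
    (∃! J : V →ₗ[ℝ] V, J ∘ₗ J = -LinearMap.id ∧
      Module.End.eigenspace (LinearMap.baseChange ℂ J) Complex.I = LinearMap.ker σ) := by
  classical
  -- basic setup
  set σ' : VC V →ₗ[ℂ] VC V →ₗ[ℂ] ℂ := sigmaBar σ with hσ'def
  have hσ'app : ∀ v w : VC V, σ' v w = (starRingEnd ℂ) (σ (cV V v) (cV V w)) :=
    fun v w => rfl
  have hwedge : ∀ v₁ v₂ v₃ v₄ : VC V,
      wedge4 V (fun v w => σ v w)
        (fun v w => (starRingEnd ℂ) (σ (cV V v) (cV V w))) v₁ v₂ v₃ v₄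
      = w4 σ σ' v₁ v₂ v₃ v₄ := fun v₁ v₂ v₃ v₄ => rfl
  have b : Module.Basis (Fin 4) ℝ V := Module.finBasisOfFinrankEq ℝ V hdim
  have bC : Module.Basis (Fin 4) ℂ (VC V) := Algebra.TensorProduct.basis ℂ b
  haveI : FiniteDimensional ℂ (VC V) := Module.Finite.of_basis bC
  have hd4 : Module.finrank ℂ (VC V) = 4 := by
    rw [Module.finrank_eq_card_basis bC, Fintype.card_fin]
  -- σ is nonzero
  have hex : ∃ a b : VC V, σ a b ≠ 0 := by
    by_contra h
    push_neg at h
    obtain ⟨v₁, v₂, v₃, v₄, hne⟩ := hσσbar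
    exact hne (by simp [wedge4, h])
  obtain ⟨a, b', hab⟩ := hex
  -- Plücker relation for σ
  have hpl : ∀ v w a b : VC V, σ v w * σ a b - σ v a * σ w b + σ v b * σ w a = 0 := by
    intro v w a b
    have h0 := hσσ v w a b
    simp only [wedge4] at h0
    linear_combination h0 / 2
  -- properties of σ'
  have halt' : ∀ v : VC V, σ' v v = 0 := by
    intro v; rw [hσ'app, halt, map_zero]
  have hpl' : ∀ v w a b : VC V, σ' v w * σ' a b - σ' v a * σ' w b + σ' v b * σ' w a = 0 := by
    intro v w a b
    have h0 := congrArg (starRingEnd ℂ) (hpl (cV V v) (cV V w) (cV V a) (cV V b))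
    simpa only [map_sub, map_add, map_mul, map_zero, ← hσ'app] using h0
  have hab' : σ' (cV V a) (cV V b') ≠ 0 := by
    rw [hσ'app, cV_cV, cV_cV]
    simpa using hab
  -- the kernel and its conjugate
  have hK'eq : Submodule.span ℂ (cV V '' (LinearMap.ker σ : Set (VC V))) = LinearMap.ker σ' := by
    apply le_antisymm
    · rw [Submodule.span_le]
      rintro x ⟨u, hu, rfl⟩
      rw [SetLike.mem_coe, LinearMap.mem_ker]
      apply LinearMap.ext
      intro w
      rw [hσ'app, cV_cV]
      rw [SetLike.mem_coe, LinearMap.mem_ker] at hu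
      rw [hu]
      simp
    · intro x hx
      rw [LinearMap.mem_ker] at hx
      have hcx : cV V x ∈ LinearMap.ker σ := by
        rw [LinearMap.mem_ker]
        apply LinearMap.ext
        intro w
        have h0 : σ' x (cV V w) = 0 := by rw [hx]; simp
        rw [hσ'app, cV_cV] at h0
        have := congrArg (starRingEnd ℂ) h0
        simpa using this
      have : x = cV V (cV V x) := (cV_cV x).symm
      rw [this]
      exact Submodule.subset_span ⟨cV V x, hcx, rfl⟩
  -- Part A: dimension 2
  have hrank : Module.finrank ℂ (LinearMap.ker σ) = 2 :=
    ker_finrank_two hd4 σ halt hpl hab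
  -- Part B: disjointness
  have hinf : LinearMap.ker σ ⊓ Submodule.span ℂ (cV V '' (LinearMap.ker σ : Set (VC V))) = ⊥ := by
    rw [Submodule.eq_bot_iff]
    intro x hxm
    by_contra hx0
    rw [Submodule.mem_inf] at hxm
    obtain ⟨hx1m, hx2m⟩ := hxm
    rw [hK'eq] at hx2m
    have hx1 : σ x = 0 := LinearMap.mem_ker.mp hx1m
    have hx2 : σ' x = 0 := LinearMap.mem_ker.mp hx2m
    obtain ⟨v₁, v₂, v₃, v₄, hne⟩ := hσσbar
    apply hne
    rw [hwedge]
    set p : Submodule ℂ (VC V) := Submodule.span ℂ {x} with hp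
    have hp1 : Module.finrank ℂ p = 1 := finrank_span_singleton hx0
    have hQ3 : Module.finrank ℂ (VC V ⧸ p) = 3 := by
      have := Submodule.finrank_quotient_add_finrank p
      omega
    set vv : Fin 4 → VC V := ![v₁, v₂, v₃, v₄] with hvv
    have hnli : ¬ LinearIndependent ℂ (fun i => p.mkQ (vv i)) := by
      intro h
      have := h.fintype_card_le_finrank
      rw [hQ3, Fintype.card_fin] at this
      omega
    obtain ⟨g, hsum0, i, hgi⟩ := Fintype.not_linearIndependent_iff.mp hnli
    have hmem : (∑ j, g j • vv j) ∈ p := by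
      rw [← Submodule.ker_mkQ p, LinearMap.mem_ker, map_sum]
      simpa only [map_smul] using hsum0
    rw [hp, Submodule.mem_span_singleton] at hmem
    obtain ⟨c, hc⟩ := hmem
    have hys : ∀ w, σ (c • x) w = 0 := by
      intro w; rw [map_smul, hx1]; simp
    have hyt : ∀ w, σ' (c • x) w = 0 := by
      intro w; rw [map_smul, hx2]; simp
    have hsum : g 0 • v₁ + g 1 • v₂ + g 2 • v₃ + g 3 • v₄ = c • x := by
      rw [hc, Fin.sum_univ_four]
      simp [hvv]
    have hgne : ¬ (g 0 = 0 ∧ g 1 = 0 ∧ g 2 = 0 ∧ g 3 = 0) := by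
      fin_cases i <;> tauto
    exact w4_vanish σ σ' halt halt' (c • x) hys hyt v₁ v₂ v₃ v₄ (g 0) (g 1) (g 2) (g 3)
      hgne hsum
  -- Part C: complementarity
  have hrank' : Module.finrank ℂ
      (Submodule.span ℂ (cV V '' (LinearMap.ker σ : Set (VC V)))) = 2 := by
    rw [hK'eq]
    exact ker_finrank_two hd4 σ' halt' hpl' hab'
  have hsup : LinearMap.ker σ ⊔ Submodule.span ℂ (cV V '' (LinearMap.ker σ : Set (VC V))) = ⊤ := by
    apply Submodule.eq_top_of_finrank_eq
    have h0 := Submodule.finrank_sup_add_finrank_inf_eq (LinearMap.ker σ)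
      (Submodule.span ℂ (cV V '' (LinearMap.ker σ : Set (VC V))))
    rw [hinf, hrank, hrank'] at h0
    simp only [finrank_bot] at h0
    omega
  have hcompl : IsCompl (LinearMap.ker σ)
      (Submodule.span ℂ (cV V '' (LinearMap.ker σ : Set (VC V)))) :=
    ⟨disjoint_iff.mpr hinf, codisjoint_iff.mpr hsup⟩
  refine ⟨hrank, hinf, hcompl, ?_⟩
  -- Part D: the complex structure J
  set K : Submodule ℂ (VC V) := LinearMap.ker σ with hKdef
  set K' : Submodule ℂ (VC V) :=
    Submodule.span ℂ (cV V '' (LinearMap.ker σ : Set (VC V))) with hK'def2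
  set prK := K.linearProjOfIsCompl K' hcompl with hprK
  set prK' := K'.linearProjOfIsCompl K hcompl.symm with hprK'
  have hdecomp : ∀ x : VC V, (prK x : VC V) + (prK' x : VC V) = x := fun x =>
    Submodule.projection_add_projection_eq_self hcompl x
  set Jc : VC V →ₗ[ℂ] VC V :=
    Complex.I • (K.subtype ∘ₗ prK) - Complex.I • (K'.subtype ∘ₗ prK') with hJcdef
  have hJc_apply : ∀ x, Jc x = Complex.I • (prK x : VC V) - Complex.I • (prK' x : VC V) :=
    fun x => rfl
  have hJcK : ∀ x ∈ K, Jc x = Complex.I • x := by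
    intro x hx
    rw [hJc_apply,
      show prK x = ⟨x, hx⟩ from Submodule.linearProjOfIsCompl_apply_left hcompl ⟨x, hx⟩,
      show prK' x = 0 from Submodule.linearProjOfIsCompl_apply_right' hcompl.symm hx]
    simp
  have hJcK' : ∀ x ∈ K', Jc x = -(Complex.I • x) := by
    intro x hx
    rw [hJc_apply,
      show prK' x = ⟨x, hx⟩ from Submodule.linearProjOfIsCompl_apply_left hcompl.symm ⟨x, hx⟩,
      show prK x = 0 from Submodule.linearProjOfIsCompl_apply_right' hcompl hx]
    simp
  have hcVK : ∀ x ∈ K, cV V x ∈ K' := fun x hx => Submodule.subset_span ⟨x, hx, rfl⟩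
  have hcVK' : ∀ x ∈ K', cV V x ∈ K := by
    intro x hx
    have hx' : x ∈ LinearMap.ker σ' := by rw [← hK'eq]; exact hx
    have hx2 : σ' x = 0 := LinearMap.mem_ker.mp hx'
    show cV V x ∈ LinearMap.ker σ
    rw [LinearMap.mem_ker]
    apply LinearMap.ext
    intro w
    have h0 : σ' x (cV V w) = 0 := by rw [hx2]; simp
    rw [hσ'app, cV_cV] at h0
    have h1 := congrArg (starRingEnd ℂ) h0
    simpa using h1
  have hJccV : ∀ x, Jc (cV V x) = cV V (Jc x) := by
    intro x
    have hk : (prK x : VC V) ∈ K := (prK x).2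
    have hk' : (prK' x : VC V) ∈ K' := (prK' x).2
    have h1 : cV V x = cV V (prK x : VC V) + cV V (prK' x : VC V) := by
      rw [← map_add, hdecomp]
    rw [h1, map_add, hJcK' _ (hcVK _ hk), hJcK _ (hcVK' _ hk'), hJc_apply, map_sub,
      cV_smul, cV_smul]
    simp only [Complex.conj_I, neg_smul]
    abel
  -- the real points
  set ι : V →ₗ[ℝ] VC V := TensorProduct.mk ℝ ℂ V 1 with hιdef
  have hι : ∀ v : V, ι v = (1 : ℂ) ⊗ₜ[ℝ] v := fun v => rfl
  set ρ : VC V →ₗ[ℝ] V := TensorProduct.lift ((LinearMap.lsmul ℝ V) ∘ₗ Complex.reLm)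
    with hρdef
  have hρ : ∀ (c : ℂ) (v : V), ρ (c ⊗ₜ[ℝ] v) = c.re • v := fun c v => rfl
  have hρι : ∀ v, ρ (ι v) = v := by
    intro v
    rw [hι, hρ]
    simp
  have hι_inj : Function.Injective ι := by
    intro v w h
    have h2 := congrArg ρ h
    rwa [hρι, hρι] at h2
  have hcVι : ∀ v, cV V (ι v) = ι v := by
    intro v
    rw [hι, cV_tmul]
    simp
  have hreal : ∀ x : VC V, cV V x = x → ∃ v : V, ι v = x := by
    intro x hx
    have hsum : ∀ y : VC V, ∃ v : V, ι v = y + cV V y := by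
      intro y
      induction y using TensorProduct.induction_on with
      | zero => exact ⟨0, by simp⟩
      | tmul c v =>
        refine ⟨(2 * c.re) • v, ?_⟩
        rw [hι, cV_tmul, ← TensorProduct.add_tmul, ← TensorProduct.smul_tmul]
        congr 1
        rw [Complex.add_conj]
        simp [Complex.real_smul]
      | add y z hy hz =>
        obtain ⟨vy, hvy⟩ := hy
        obtain ⟨vz, hvz⟩ := hz
        refine ⟨vy + vz, ?_⟩
        rw [map_add, hvy, hvz, map_add]
        abel
    obtain ⟨v, hv⟩ := hsum x
    refine ⟨(1 / 2 : ℝ) • v, ?_⟩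
    rw [map_smul, hv, hx]
    have h2 : x + x = (2 : ℝ) • x := by
      rw [two_smul]
    rw [h2, smul_smul]
    norm_num
  -- the map J
  set J : V →ₗ[ℝ] V := ρ ∘ₗ (Jc.restrictScalars ℝ) ∘ₗ ι with hJdef
  have hJv : ∀ v, J v = ρ (Jc (ι v)) := fun v => rfl
  have hJι : ∀ v, ι (J v) = Jc (ι v) := by
    intro v
    obtain ⟨w, hw⟩ := hreal (Jc (ι v)) (by rw [← hJccV, hcVι])
    rw [hJv, ← hw, hρι]
  have hJcJc : ∀ x, Jc (Jc x) = -x := by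
    intro x
    rw [hJc_apply x, map_sub, map_smul, map_smul, hJcK _ (prK x).2, hJcK' _ (prK' x).2]
    have h1 : -x = -((prK x : VC V) + (prK' x : VC V)) := by rw [hdecomp]
    rw [h1]
    simp only [smul_neg, smul_smul, Complex.I_mul_I, neg_smul, one_smul, sub_neg_eq_add,
      neg_add_rev, neg_neg]
    abel
  have hJJ : J ∘ₗ J = -LinearMap.id := by
    apply LinearMap.ext
    intro v
    apply hι_inj
    rw [LinearMap.comp_apply, hJι, hJι, hJcJc]
    simp only [LinearMap.neg_apply, LinearMap.id_apply, map_neg]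
  have hbase : J.baseChange ℂ = Jc := by
    apply LinearMap.ext
    intro x
    induction x using TensorProduct.induction_on with
    | zero => simp
    | tmul c v =>
      rw [LinearMap.baseChange_tmul]
      have h2 : c ⊗ₜ[ℝ] (J v) = c • (ι (J v)) := by
        rw [hι, TensorProduct.smul_tmul']
        simp
      have h3 : c ⊗ₜ[ℝ] v = c • (ι v) := by
        rw [hι, TensorProduct.smul_tmul']
        simp
      rw [h2, hJι, h3, map_smul]
    | add y z hy hz => rw [map_add, map_add, hy, hz]
  have heig : Module.End.eigenspace (LinearMap.baseChange ℂ J) Complex.I = K := by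
    rw [hbase]
    ext x
    rw [Module.End.mem_eigenspace_iff]
    constructor
    · intro hx
      have h1 : prK' (Jc x) = -(Complex.I • prK' x) := by
        rw [hJc_apply, map_sub, map_smul, map_smul,
          show prK' (prK x : VC V) = 0 from
            Submodule.linearProjOfIsCompl_apply_right' hcompl.symm (prK x).2,
          show prK' (prK' x : VC V) = prK' x from
            Submodule.linearProjOfIsCompl_apply_left hcompl.symm (prK' x)]
        simp
      rw [hx, map_smul] at h1
      have h2 : (2 * Complex.I) • prK' x = 0 := by
        rw [two_mul, add_smul]
        exact add_eq_zero_iff_eq_neg.mpr h1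
      have h4 : prK' x = 0 := by
        rcases smul_eq_zero.mp h2 with h | h
        · exact absurd h (by simp [Complex.I_ne_zero])
        · exact h
      have h5 := hdecomp x
      rw [h4] at h5
      simp only [Submodule.coe_zero, add_zero] at h5
      rw [← h5]
      exact (prK x).2
    · intro hx
      exact hJcK x hx
  refine ⟨J, ⟨hJJ, heig⟩, ?_⟩
  rintro J₂ ⟨hJ₂sq, hJ₂eig⟩
  have hbc_cV : ∀ (L : V →ₗ[ℝ] V) (x : VC V),
      cV V ((L.baseChange ℂ) x) = (L.baseChange ℂ) (cV V x) := by
    intro L x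
    induction x using TensorProduct.induction_on with
    | zero => simp
    | tmul c v => rw [LinearMap.baseChange_tmul, cV_tmul, cV_tmul, LinearMap.baseChange_tmul]
    | add y z hy hz => rw [map_add, map_add, map_add, map_add, hy, hz]
  have hF : J₂.baseChange ℂ = Jc := by
    have hFk : ∀ y ∈ K, (J₂.baseChange ℂ) y = Complex.I • y := by
      intro y hy
      have hy2 : y ∈ Module.End.eigenspace (J₂.baseChange ℂ) Complex.I := by
        rw [hJ₂eig]; exact hy
      exact Module.End.mem_eigenspace_iff.mp hy2
    have hFk' : ∀ y ∈ K', (J₂.baseChange ℂ) y = -(Complex.I • y) := by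
      intro y hy
      have hy2 : y ∈ Submodule.span ℂ (cV V '' (LinearMap.ker σ : Set (VC V))) := hy
      clear hy
      induction hy2 using Submodule.span_induction with
      | mem z hz =>
        obtain ⟨u, hu, rfl⟩ := hz
        rw [← hbc_cV, hFk u hu, cV_smul]
        simp [Complex.conj_I]
      | zero => simp
      | add a b ha hb iha ihb =>
        rw [map_add, iha, ihb, smul_add]
        abel
      | smul z a ha iha =>
        rw [map_smul, iha, smul_smul, smul_neg, smul_smul, mul_comm]
    apply LinearMap.ext
    intro x
    have h1 : (J₂.baseChange ℂ) x
        = (J₂.baseChange ℂ) (prK x : VC V) + (J₂.baseChange ℂ) (prK' x : VC V) := by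
      rw [← map_add, hdecomp]
    rw [h1, hFk _ (prK x).2, hFk' _ (prK' x).2, hJc_apply]
    abel
  apply LinearMap.ext
  intro v
  apply hι_inj
  have h1 : ι (J₂ v) = (J₂.baseChange ℂ) (ι v) := by
    rw [hι, hι, LinearMap.baseChange_tmul]
  rw [h1, hF, ← hJι]

end
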